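/- Let G be a complex semisimple Lie group, P, Q parabolic subgroups with P ∩ Q parabolic, and suppose for each k ≥ 1 the k-th Q-tower T^k_{x₀} is realized as the set of tuples (x₁,…,x_k,s₁,…,s_k) ∈ (G/P)^k × (G/Q)^k with x_{j−1}, x_j ∈ P_{s_j} for all j (x₀ fixed). Then for 1 ≤ j < k, the truncation map π_{k,j}(x₁,…,x_k,s₁,…,s_k) = (x₁,…,x_j,s₁,…,s_j) is a surjective holomorphic map T^k_{x₀} → T^j_{x₀}, and its fiber over a point (x₁,…,x_j,s₁,…,s_j) is canonically identified with the tower T^{k−j}_{x_j}; in particular T^{k−j}_{x₀} → T^k_{x₀} → T^j_{x₀} is a holomorphic fiber bundle. -/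

import Mathlib

open scoped Pointwise

/-- Surrogate definition of a parabolic subgroup of a (complex semisimple Lie) group:
a closed subgroup with compact (projective) quotient. -/
def IsParabolic (G : Type*) [Group G] [TopologicalSpace G] (H : Subgroup G) : Prop :=
  IsClosed (H : Set G) ∧ CompactSpace (G ⧸ H)

/-- A `Q`-cycle in `G ⧸ P`: a `G`-translate of the `Q`-orbit of the base point `x₀ = 1·P`. -/
def IsQCycle (G : Type*) [Group G] (P Q : Subgroup G) (C : Set (G ⧸ P)) : Prop :=
  ∃ g : G, C = g • (MulAction.orbit Q ((1 : G) : G ⧸ P))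

/-- A chain of `n + 1` `Q`-cycles connecting `x` to `y`: consecutive cycles intersect,
`x` lies in the first one and `y` in the last one. -/
def QCycleChain (G : Type*) [Group G] (P Q : Subgroup G) (n : ℕ) (x y : G ⧸ P) : Prop :=
  ∃ C : Fin (n + 1) → Set (G ⧸ P),
    (∀ i, IsQCycle G P Q (C i)) ∧
    (∀ i : Fin n, (C i.castSucc ∩ C i.succ).Nonempty) ∧
    x ∈ C 0 ∧ y ∈ C (Fin.last n)

/-- `G ⧸ P` is `Q`-cycle-connected if any two points are joined by a finite chain of
`Q`-cycles. -/
def QCycleConnected (G : Type*) [Group G] (P Q : Subgroup G) : Prop :=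
  ∀ x y : G ⧸ P, ∃ n : ℕ, QCycleChain G P Q n x y

/-- The `Q`-cycle `P_s = p(q⁻¹(s)) ⊆ G ⧸ P` associated to a point `s ∈ G ⧸ Q`:
for `s = gQ` it is the translate `g • (Q • x₀)`. -/
def cycleOf (G : Type*) [Group G] (P Q : Subgroup G) (s : G ⧸ Q) : Set (G ⧸ P) :=
  {x | ∃ g : G, (QuotientGroup.mk g : G ⧸ Q) = s ∧
        x ∈ g • (MulAction.orbit Q ((1 : G) : G ⧸ P))}

/-- The `n`-th `Q`-tower at `x₀`, realized concretely as the set of tuples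
`(x₁, …, xₙ, s₁, …, sₙ)` such that the `Q`-cycle `P_{s_j}` contains both `x_{j-1}`
and `x_j` for every `j` (with the convention `x₀` fixed). -/
def TowerSet (G : Type*) [Group G] (P Q : Subgroup G) (x0 : G ⧸ P) (n : ℕ) :
    Set ((Fin n → G ⧸ P) × (Fin n → G ⧸ Q)) :=
  {t | ∀ j : Fin n, (Fin.cons x0 t.1 : Fin (n+1) → G ⧸ P) j.castSucc ∈ cycleOf G P Q (t.2 j) ∧
        (Fin.cons x0 t.1 : Fin (n+1) → G ⧸ P) j.succ ∈ cycleOf G P Q (t.2 j)}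

/-- The evaluation map of the `n`-th `Q`-tower, sending `(x₁, …, xₙ, s₁, …, sₙ)` to `xₙ`
(and to `x₀` when `n = 0`). -/
def evalTower (G : Type*) [Group G] (P Q : Subgroup G) (x0 : G ⧸ P) (n : ℕ)
    (t : (Fin n → G ⧸ P) × (Fin n → G ⧸ Q)) : G ⧸ P :=
  (Fin.cons x0 t.1 : Fin (n+1) → G ⧸ P) (Fin.last n)

/-- The truncation map `π_{k,j}` (with `k = j + d`), sending
`(x₁, …, x_k, s₁, …, s_k)` to `(x₁, …, x_j, s₁, …, s_j)`. -/
def truncTower (G : Type*) [Group G] (P Q : Subgroup G) (j d : ℕ)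
    (t : (Fin (j + d) → G ⧸ P) × (Fin (j + d) → G ⧸ Q)) :
    (Fin j → G ⧸ P) × (Fin j → G ⧸ Q) :=
  (t.1 ∘ Fin.castAdd d, t.2 ∘ Fin.castAdd d)

/-- Appending a `d`-chain tuple to a `j`-chain tuple. -/
def appendTower (G : Type*) [Group G] (P Q : Subgroup G) (j d : ℕ)
    (t : (Fin j → G ⧸ P) × (Fin j → G ⧸ Q))
    (u : (Fin d → G ⧸ P) × (Fin d → G ⧸ Q)) :
    (Fin (j + d) → G ⧸ P) × (Fin (j + d) → G ⧸ Q) :=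
  (Fin.append t.1 u.1, Fin.append t.2 u.2)

/-- For `1 ≤ j < k`, `k = j + d`, the truncation `π_{k,j} : T^k_{x₀} → T^j_{x₀}` is a
holomorphic (here: continuous) surjection, and its fiber over a point `t ∈ T^j_{x₀}` is
canonically identified, via appending, with the tower `T^d_{x_j}` based at the evaluation
point of `t`; in particular `T^d → T^k_{x₀} → T^j_{x₀}` is a fiber bundle. -/

private lemma lemA {X : Type*} {j d : ℕ} (x0 : X) (f : Fin (j + d) → X) (i : Fin (j + 1)) :
    (Fin.cons x0 (f ∘ Fin.castAdd d) : Fin (j + 1) → X) i =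
      (Fin.cons x0 f : Fin (j + d + 1) → X) (Fin.castLE (by omega : j + 1 ≤ j + d + 1) i) := by
  induction i using Fin.cases with
  | zero => rfl
  | succ m =>
    have h : Fin.castLE (by omega : j + 1 ≤ j + d + 1) m.succ = (Fin.castAdd d m).succ := by
      ext; simp
    rw [h, Fin.cons_succ, Fin.cons_succ]; rfl

private lemma lemB {X : Type*} {j d : ℕ} (x0 : X) (f : Fin j → X) (u : Fin d → X)
    (i : Fin (d + 1)) (h : j + i.val < j + d + 1) :
    (Fin.cons ((Fin.cons x0 f : Fin (j + 1) → X) (Fin.last j)) u : Fin (d + 1) → X) i =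
      (Fin.cons x0 (Fin.append f u) : Fin (j + d + 1) → X) ⟨j + i.val, h⟩ := by
  induction i using Fin.cases with
  | zero =>
    rw [Fin.cons_zero]
    cases j with
    | zero => rfl
    | succ m =>
      have h1 : (⟨m + 1 + ((0 : Fin (d + 1)) : ℕ), h⟩ : Fin (m + 1 + d + 1))
          = Fin.succ ⟨m, by omega⟩ := by
        ext; simp
      rw [h1, Fin.cons_succ]
      have h2 : (⟨m, by omega⟩ : Fin (m + 1 + d)) = Fin.castAdd d (Fin.last m) := by
        ext; simp [Fin.last]
      rw [h2, Fin.append_left, ← Fin.succ_last, Fin.cons_succ]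
  | succ m =>
    rw [Fin.cons_succ]
    have h1 : (⟨j + m.succ.val, h⟩ : Fin (j + d + 1)) = Fin.succ ⟨j + m.val, by omega⟩ := by
      ext; simp; omega
    rw [h1, Fin.cons_succ]
    have h2 : (⟨j + m.val, by omega⟩ : Fin (j + d)) = Fin.natAdd j m := by
      ext; simp
    rw [h2, Fin.append_right]

private lemma const_cons {X : Type*} {d : ℕ} (x : X) (i : Fin (d + 1)) :
    (Fin.cons x (fun _ : Fin d => x) : Fin (d + 1) → X) i = x := by
  induction i using Fin.cases <;> simp

private lemma self_mem_cycleOf (G : Type*) [Group G] (P Q : Subgroup G) (g : G) :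
    (QuotientGroup.mk g : G ⧸ P) ∈ cycleOf G P Q (QuotientGroup.mk g : G ⧸ Q) := by
  refine ⟨g, rfl, ⟨((1 : G) : G ⧸ P), MulAction.mem_orbit_self _, ?_⟩⟩
  show g • ((1 : G) : G ⧸ P) = QuotientGroup.mk g
  simp [MulAction.Quotient.smul_mk]

private lemma towerSet_nonempty (G : Type*) [Group G] (P Q : Subgroup G)
    (x : G ⧸ P) (d : ℕ) : (TowerSet G P Q x d).Nonempty := by
  obtain ⟨g, hg⟩ := QuotientGroup.mk_surjective x
  refine ⟨(fun _ => x, fun _ => (QuotientGroup.mk g : G ⧸ Q)), fun m => ?_⟩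
  constructor <;> rw [const_cons, ← hg] <;> exact self_mem_cycleOf G P Q g

theorem stmt16 (G : Type*) [Group G] [TopologicalSpace G] [IsTopologicalGroup G]
    (P Q : Subgroup G)
    (hP : IsParabolic G P) (hQ : IsParabolic G Q) (hPQ : IsParabolic G (P ⊓ Q))
    (x0 : G ⧸ P) (hx0 : x0 = ((1 : G) : G ⧸ P)) (j d : ℕ) (hd : 0 < d) :
    Continuous (truncTower G P Q j d) ∧
      Set.MapsTo (truncTower G P Q j d) (TowerSet G P Q x0 (j + d)) (TowerSet G P Q x0 j) ∧
      Set.SurjOn (truncTower G P Q j d) (TowerSet G P Q x0 (j + d)) (TowerSet G P Q x0 j) ∧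
      ∀ t ∈ TowerSet G P Q x0 j,
        Set.BijOn (appendTower G P Q j d t)
          (TowerSet G P Q (evalTower G P Q x0 j t) d)
          {u ∈ TowerSet G P Q x0 (j + d) | truncTower G P Q j d u = t} := by
  have hx : ∀ (n : ℕ) (x : G ⧸ P) (t : (Fin n → G ⧸ P) × (Fin n → G ⧸ Q)),
      evalTower G P Q x n t = (Fin.cons x t.1 : Fin (n + 1) → G ⧸ P) (Fin.last n) :=
    fun _ _ _ => rfl
  have cont : Continuous (truncTower G P Q j d) := by
    refine Continuous.prodMk ?_ ?_
    · exact continuous_pi fun i => (continuous_apply _).comp continuous_fst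
    · exact continuous_pi fun i => (continuous_apply _).comp continuous_snd
  have maps : Set.MapsTo (truncTower G P Q j d) (TowerSet G P Q x0 (j + d))
      (TowerSet G P Q x0 j) := by
    intro t ht i
    have e1 : Fin.castLE (by omega : j + 1 ≤ j + d + 1) i.castSucc
        = (Fin.castAdd d i).castSucc := by ext; simp
    have e2 : Fin.castLE (by omega : j + 1 ≤ j + d + 1) i.succ
        = (Fin.castAdd d i).succ := by ext; simp
    constructor
    · simp only [truncTower]
      rw [lemA, e1]; exact (ht (Fin.castAdd d i)).1
    · simp only [truncTower]
      rw [lemA, e2]; exact (ht (Fin.castAdd d i)).2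
  have bij : ∀ t ∈ TowerSet G P Q x0 j,
      Set.BijOn (appendTower G P Q j d t)
        (TowerSet G P Q (evalTower G P Q x0 j t) d)
        {u ∈ TowerSet G P Q x0 (j + d) | truncTower G P Q j d u = t} := by
    intro t ht
    have key : ∀ u : (Fin d → G ⧸ P) × (Fin d → G ⧸ Q),
        (u ∈ TowerSet G P Q (evalTower G P Q x0 j t) d ↔
          appendTower G P Q j d t u ∈ TowerSet G P Q x0 (j + d)) := by
      intro u
      constructor
      · intro hu i
        refine Fin.addCases (fun i => ?_) (fun m => ?_) i
        · -- first j conditions come from ht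
          have e1 : (Fin.castAdd d i).castSucc
              = Fin.castLE (by omega : j + 1 ≤ j + d + 1) i.castSucc := by ext; simp
          have e2 : (Fin.castAdd d i).succ
              = Fin.castLE (by omega : j + 1 ≤ j + d + 1) i.succ := by ext; simp
          have hs : Fin.append t.2 u.2 (Fin.castAdd d i) = t.2 i :=
            Fin.append_left _ _ _
          have hc : (Fin.append t.1 u.1 ∘ Fin.castAdd d) = t.1 := by
            funext a; exact Fin.append_left _ _ _
          constructor
          · simp only [appendTower]
            rw [e1, ← lemA, hc, hs]; exact (ht i).1
          · simp only [appendTower]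
            rw [e2, ← lemA, hc, hs]; exact (ht i).2
        · -- last d conditions come from hu
          have hs : Fin.append t.2 u.2 (Fin.natAdd j m) = u.2 m :=
            Fin.append_right _ _ _
          have e1 : (Fin.natAdd j m).castSucc
              = (⟨j + (m.castSucc).val, by omega⟩ : Fin (j + d + 1)) := by ext; simp
          have e2 : (Fin.natAdd j m).succ
              = (⟨j + (m.succ).val, by omega⟩ : Fin (j + d + 1)) := by
            ext; simp; omega
          constructor
          · simp only [appendTower]
            rw [e1, ← lemB, ← hx, hs]; exact (hu m).1
          · simp only [appendTower]
            rw [e2, ← lemB, ← hx, hs]; exact (hu m).2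
      · intro hu m
        have hs : u.2 m = Fin.append t.2 u.2 (Fin.natAdd j m) :=
          (Fin.append_right _ _ _).symm
        have e1 : (Fin.natAdd j m).castSucc
            = (⟨j + (m.castSucc).val, by omega⟩ : Fin (j + d + 1)) := by ext; simp
        have e2 : (Fin.natAdd j m).succ
            = (⟨j + (m.succ).val, by omega⟩ : Fin (j + d + 1)) := by
          ext; simp; omega
        constructor
        · rw [hx, lemB x0 t.1 u.1 m.castSucc (by omega), ← e1, hs]
          exact (hu (Fin.natAdd j m)).1
        · rw [hx, lemB x0 t.1 u.1 m.succ (by omega), ← e2, hs]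
          exact (hu (Fin.natAdd j m)).2
    have trunc_append : ∀ u, truncTower G P Q j d (appendTower G P Q j d t u) = t := by
      intro u
      refine Prod.ext ?_ ?_ <;> funext a <;> exact Fin.append_left _ _ _
    refine ⟨fun u hu => ⟨(key u).1 hu, trunc_append u⟩, ?_, ?_⟩
    · intro u1 h1 u2 h2 heq
      have h1' : u1.1 = u2.1 := by
        funext a
        have := congrFun (congrArg Prod.fst heq) (Fin.natAdd j a)
        simpa [appendTower, Fin.append_right] using this
      have h2' : u1.2 = u2.2 := by
        funext a
        have := congrFun (congrArg Prod.snd heq) (Fin.natAdd j a)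
        simpa [appendTower, Fin.append_right] using this
      exact Prod.ext h1' h2'
    · rintro u' ⟨hu', htr⟩
      refine ⟨(u'.1 ∘ Fin.natAdd j, u'.2 ∘ Fin.natAdd j), ?_, ?_⟩
      swap
      · -- appendTower t (tail of u') = u'
        have : appendTower G P Q j d t (u'.1 ∘ Fin.natAdd j, u'.2 ∘ Fin.natAdd j) = u' := by
          refine Prod.ext ?_ ?_ <;> funext a <;>
            refine Fin.addCases (fun i => ?_) (fun m => ?_) a
          · show Fin.append t.1 _ _ = _
            rw [Fin.append_left]
            exact (congrFun (congrArg Prod.fst htr) i).symm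
          · exact Fin.append_right _ _ _
          · show Fin.append t.2 _ _ = _
            rw [Fin.append_left]
            exact (congrFun (congrArg Prod.snd htr) i).symm
          · exact Fin.append_right _ _ _
        exact this
      · -- membership, using key backwards
        have happ : appendTower G P Q j d t (u'.1 ∘ Fin.natAdd j, u'.2 ∘ Fin.natAdd j) = u' := by
          refine Prod.ext ?_ ?_ <;> funext a <;>
            refine Fin.addCases (fun i => ?_) (fun m => ?_) a
          · show Fin.append t.1 _ _ = _
            rw [Fin.append_left]
            exact (congrFun (congrArg Prod.fst htr) i).symm
          · exact Fin.append_right _ _ _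
          · show Fin.append t.2 _ _ = _
            rw [Fin.append_left]
            exact (congrFun (congrArg Prod.snd htr) i).symm
          · exact Fin.append_right _ _ _
        refine (key _).2 ?_
        rw [happ]; exact hu' 
  have surj : Set.SurjOn (truncTower G P Q j d) (TowerSet G P Q x0 (j + d))
      (TowerSet G P Q x0 j) := by
    intro t ht
    obtain ⟨u, hu⟩ := towerSet_nonempty G P Q (evalTower G P Q x0 j t) d
    obtain ⟨h1, h2⟩ := (bij t ht).mapsTo hu
    exact ⟨appendTower G P Q j d t u, h1, h2⟩
  exact ⟨cont, maps, surj, bij⟩
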